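/- For a non-negative complex symplectic transformation R with R + I invertible, the quadratic form X ↦ Re(σ(X, SX)) on ℝ^{2n} is non-positive, where S = -i(R - I)(R + I)^{-1}. -/
import Mathlib


open Matrix
open scoped ComplexOrder

/-- The standard symplectic matrix `[[0, Iₙ], [-Iₙ, 0]]`. -/
noncomputable def sympMat (n : ℕ) : Matrix (Fin n ⊕ Fin n) (Fin n ⊕ Fin n) ℂ :=
  Matrix.fromBlocks 0 1 (-1) 0

/-- The standard symplectic bilinear form `σ((x,ξ),(y,η)) = ⟨ξ,y⟩ - ⟨x,η⟩` on `ℂ^{2n}`. -/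
noncomputable def sympForm (n : ℕ) (X Y : Fin n ⊕ Fin n → ℂ) : ℂ :=
  (sympMat n *ᵥ X) ⬝ᵥ Y

lemma sympMat_transpose (n : ℕ) : (sympMat n)ᵀ = -sympMat n := by
  ext i j
  rcases i with i | i <;> rcases j with j | j <;>
    simp [sympMat, Matrix.fromBlocks, Matrix.transpose_apply, Matrix.one_apply, eq_comm]

lemma sympMat_star_apply (n : ℕ) (i j : Fin n ⊕ Fin n) :
    star (sympMat n i j) = sympMat n i j := by
  rcases i with i | i <;> rcases j with j | j <;>
    simp [sympMat, Matrix.fromBlocks, Matrix.one_apply, apply_ite]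

lemma sympForm_star (n : ℕ) (u v : Fin n ⊕ Fin n → ℂ) :
    star (sympForm n u v) = sympForm n (star u) (star v) := by
  simp [sympForm, dotProduct, mulVec, star_mul', Finset.mul_sum, Finset.sum_mul,
    sympMat_star_apply, mul_comm, mul_left_comm]

lemma sympForm_antisymm (n : ℕ) (u v : Fin n ⊕ Fin n → ℂ) :
    sympForm n u v = -sympForm n v u := by
  unfold sympForm
  rw [dotProduct_comm, dotProduct_mulVec, ← mulVec_transpose, sympMat_transpose,
    neg_mulVec, neg_dotProduct]

lemma sympForm_self (n : ℕ) (u : Fin n ⊕ Fin n → ℂ) : sympForm n u u = 0 := by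
  have h := sympForm_antisymm n u u
  linear_combination h / 2

lemma sympForm_add_left (n : ℕ) (u v w : Fin n ⊕ Fin n → ℂ) :
    sympForm n (u + v) w = sympForm n u w + sympForm n v w := by
  simp [sympForm, mulVec_add, add_dotProduct]

lemma sympForm_add_right (n : ℕ) (u v w : Fin n ⊕ Fin n → ℂ) :
    sympForm n u (v + w) = sympForm n u v + sympForm n u w := by
  simp [sympForm, dotProduct_add]

lemma sympForm_sub_left (n : ℕ) (u v w : Fin n ⊕ Fin n → ℂ) :
    sympForm n (u - v) w = sympForm n u w - sympForm n v w := by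
  simp [sympForm, Matrix.mulVec_sub, sub_dotProduct]

lemma sympForm_sub_right (n : ℕ) (u v w : Fin n ⊕ Fin n → ℂ) :
    sympForm n u (v - w) = sympForm n u v - sympForm n u w := by
  simp [sympForm, dotProduct_sub]

lemma sympForm_smul_right (n : ℕ) (c : ℂ) (u v : Fin n ⊕ Fin n → ℂ) :
    sympForm n u (c • v) = c * sympForm n u v := by
  simp [sympForm, dotProduct_smul, smul_eq_mul]

/-- For a non-negative complex symplectic transformation `R` with `R + I` invertible, the
quadratic form `X ↦ Re σ(X, SX)` on `ℝ^{2n}` is non-positive, where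
`S = -i(R - I)(R + I)⁻¹`. -/
theorem cayley_quadratic_form_re_nonpos (n : ℕ)
    (R : Matrix (Fin n ⊕ Fin n) (Fin n ⊕ Fin n) ℂ)
    (hsymp : ∀ X Y : Fin n ⊕ Fin n → ℂ, sympForm n (R *ᵥ X) (R *ᵥ Y) = sympForm n X Y)
    (hnonneg : ∀ X : Fin n ⊕ Fin n → ℂ,
      0 ≤ Complex.I * (sympForm n (star (R *ᵥ X)) (R *ᵥ X) - sympForm n (star X) X))
    (h : IsUnit (R + 1).det) :
    ∀ X : Fin n ⊕ Fin n → ℝ,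
      (sympForm n (fun i => (X i : ℂ))
        (((-Complex.I) • ((R - 1) * (R + 1)⁻¹)) *ᵥ fun i => (X i : ℂ))).re ≤ 0 := by
  intro X
  set Xc : Fin n ⊕ Fin n → ℂ := fun i => (X i : ℂ) with hXcdef
  set Y : Fin n ⊕ Fin n → ℂ := (R + 1)⁻¹ *ᵥ Xc with hYdef
  set a : Fin n ⊕ Fin n → ℂ := R *ᵥ Y with hadef
  have h1 : (R + 1) *ᵥ Y = Xc := by
    rw [hYdef, mulVec_mulVec, Matrix.mul_nonsing_inv _ h, one_mulVec]
  have h2 : Xc = a + Y := by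
    rw [← h1, Matrix.add_mulVec, one_mulVec, hadef]
  have hS : ((-Complex.I) • ((R - 1) * (R + 1)⁻¹)) *ᵥ Xc = (-Complex.I) • (a - Y) := by
    rw [smul_mulVec, ← mulVec_mulVec, ← hYdef, Matrix.sub_mulVec, one_mulVec, hadef]
  have hstarXc : star Xc = Xc := by
    funext i
    simp [hXcdef, Complex.star_def, Complex.conj_ofReal]
  have hstar2 : star a + star Y = a + Y := by
    have := congrArg star h2
    rw [hstarXc, star_add] at this
    rw [← this, ← h2]
  have hsa : star a = a + Y - star Y := by
    rw [← hstar2]; abel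
  have hSstar : star ((-Complex.I) • (a - Y)) = Complex.I • (star a - star Y) := by
    simp [star_smul, star_sub, Complex.star_def, Complex.conj_I]
  set s : ℂ := sympForm n Xc (((-Complex.I) • ((R - 1) * (R + 1)⁻¹)) *ᵥ Xc) with hsdef
  have key : s + star s =
      (-2) * (Complex.I * (sympForm n (star (R *ᵥ Y)) (R *ᵥ Y) - sympForm n (star Y) Y)) := by
    rw [hsdef, sympForm_star, hstarXc, hS, hSstar, ← hadef]
    rw [h2, hsa]
    simp only [sympForm_add_left, sympForm_add_right, sympForm_sub_left, sympForm_sub_right,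
      sympForm_smul_right, sympForm_self]
    have e1 := sympForm_antisymm n a Y
    have e2 := sympForm_antisymm n a (star Y)
    have e3 := sympForm_antisymm n Y (star Y)
    linear_combination Complex.I * e1 - (2*Complex.I) * e2 - (2*Complex.I) * e3
  have hn := hnonneg Y
  have hre := congrArg Complex.re key
  rw [Complex.le_def] at hn
  simp only [Complex.add_re, Complex.star_def, Complex.conj_re, Complex.mul_re,
    Complex.zero_re, Complex.I_re, Complex.I_im, Complex.sub_im, Complex.sub_re] at hre hn
  norm_num at hre
  linarith [hn.1, hre]
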